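/- arXiv:2603.16170 — 2 statements merged into one kernel-verified Lean document; each statement's English description precedes it below -/
import Mathlib

section
/- Let p > 1, r > 0, a < p-1, and let f be measurable on (0,∞) with ∫_0^∞ x^a |f(x)|^p dx < ∞. Define f_r(x) = (1/Γ(r)) ∫_0^x (x-t)^{r-1} f(t) dt. Then ∫_0^∞ x^a |f_r(x)/x^r|^p dx ≤ [Γ(1-(a+1)/p)/Γ(r+1-(a+1)/p)]^p ∫_0^∞ x^a |f(x)|^p dx. -/
open MeasureTheory Real Set ENNReal

lemma beta_aux {u v x : ℝ} (hx : x ∈ Set.Icc (0:ℝ) 1) :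
    ((x:ℂ) ^ ((u:ℂ) - 1) * ((1:ℂ) - (x:ℂ)) ^ ((v:ℂ) - 1))
      = (((x ^ (u-1) * (1-x) ^ (v-1) : ℝ)) : ℂ) := by
  have hx0 : (0:ℝ) ≤ x := hx.1
  have hx1 : (0:ℝ) ≤ 1 - x := by linarith [hx.2]
  rw [Complex.ofReal_mul, Complex.ofReal_cpow hx0, Complex.ofReal_cpow hx1]
  push_cast; ring

lemma beta_integrable {u v : ℝ} (hu : 0 < u) (hv : 0 < v) :
    IntegrableOn (fun x : ℝ => x ^ (u - 1) * (1 - x) ^ (v - 1)) (Set.Ioo 0 1) := by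
  have h := (Complex.betaIntegral_convergent (u := (u : ℂ)) (v := (v : ℂ))
    (by simpa using hu) (by simpa using hv)).1
  have h2 := (h.mono_set Ioo_subset_Ioc_self).re
  refine h2.congr ?_
  refine (ae_restrict_iff' measurableSet_Ioo).2 (ae_of_all _ fun x hx => ?_)
  simp only []
  rw [beta_aux (Ioo_subset_Icc_self hx)]
  simp

lemma beta_value {u v : ℝ} (hu : 0 < u) (hv : 0 < v) :
    ∫ x in Set.Ioo (0:ℝ) 1, x ^ (u - 1) * (1 - x) ^ (v - 1)
      = Real.Gamma u * Real.Gamma v / Real.Gamma (u + v) := by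
  have h := Complex.Gamma_mul_Gamma_eq_betaIntegral (s := (u:ℂ)) (t := (v:ℂ))
    (by simpa using hu) (by simpa using hv)
  have hcongr : Complex.betaIntegral u v
      = ((∫ x in (0:ℝ)..1, x ^ (u - 1) * (1 - x) ^ (v - 1) : ℝ) : ℂ) := by
    rw [Complex.betaIntegral, ← intervalIntegral.integral_ofReal]
    refine intervalIntegral.integral_congr fun x hx => ?_
    rw [uIcc_of_le zero_le_one] at hx
    exact beta_aux hx
  rw [hcongr, Complex.Gamma_ofReal, Complex.Gamma_ofReal, ← Complex.ofReal_add,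
    Complex.Gamma_ofReal, ← Complex.ofReal_mul, ← Complex.ofReal_mul] at h
  have h' : Real.Gamma u * Real.Gamma v
      = Real.Gamma (u + v) * ∫ x in (0:ℝ)..1, x ^ (u - 1) * (1 - x) ^ (v - 1) :=
    mod_cast h
  have hG : Real.Gamma (u + v) ≠ 0 := (Real.Gamma_pos_of_pos (by linarith)).ne'
  rw [intervalIntegral.integral_of_le zero_le_one, integral_Ioc_eq_integral_Ioo] at h'
  field_simp [h']
  rw [h']; ring


lemma lintegral_Ioi_scale {g : ℝ → ℝ≥0∞} (hg : Measurable g) {s : ℝ} (hs : 0 < s) :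
    ∫⁻ x in Set.Ioi (0:ℝ), g (s * x) = ENNReal.ofReal s⁻¹ * ∫⁻ y in Set.Ioi (0:ℝ), g y := by
  have hmap := Real.map_volume_mul_left hs.ne'
  have h1 : ∫⁻ y in Set.Ioi (0:ℝ), g y ∂(Measure.map (s * ·) volume)
      = ∫⁻ x in (s * ·) ⁻¹' (Set.Ioi 0), g (s * x) :=
    setLIntegral_map measurableSet_Ioi hg (measurable_const_mul s)
  rw [Set.preimage_const_mul_Ioi₀ _ hs, zero_div] at h1
  rw [← h1, hmap, Measure.restrict_smul, lintegral_smul_measure, smul_eq_mul, abs_of_pos (inv_pos.2 hs)]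

lemma lintegral_Ioo_scale {x : ℝ} (hx : 0 < x) {G : ℝ → ℝ≥0∞} (hG : Measurable G) :
    ∫⁻ t in Set.Ioo (0:ℝ) x, G t = ENNReal.ofReal x * ∫⁻ s in Set.Ioo (0:ℝ) 1, G (x * s) := by
  have hmap := Real.map_volume_mul_left hx.ne'
  have h1 : ∫⁻ t in Set.Ioo (0:ℝ) x, G t ∂(Measure.map (x * ·) volume)
      = ∫⁻ s in (x * ·) ⁻¹' (Set.Ioo 0 x), G (x * s) :=
    setLIntegral_map measurableSet_Ioo hG (measurable_const_mul x)
  rw [Set.preimage_const_mul_Ioo₀ _ _ hx, zero_div, div_self hx.ne'] at h1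
  rw [hmap, Measure.restrict_smul, lintegral_smul_measure, smul_eq_mul, abs_of_pos (inv_pos.2 hx)] at h1
  rw [← h1, ← mul_assoc, ← ENNReal.ofReal_mul hx.le, mul_inv_cancel₀ hx.ne', ENNReal.ofReal_one,
    one_mul]

lemma subK {r : ℝ} (hr : 0 < r) {x : ℝ} (hx : 0 < x) {F : ℝ → ℝ≥0∞} (hF : Measurable F) :
    ∫⁻ t in Set.Ioo (0:ℝ) x, ENNReal.ofReal ((x - t) ^ (r-1)) * F t
      = ENNReal.ofReal (x ^ r) *
        ∫⁻ s in Set.Ioo (0:ℝ) 1, ENNReal.ofReal ((1 - s) ^ (r-1)) * F (x * s) := by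
  have hG : Measurable fun t => ENNReal.ofReal ((x - t) ^ (r-1)) * F t :=
    (ENNReal.measurable_ofReal.comp ((measurable_const.sub measurable_id).pow
      measurable_const)).mul hF
  rw [lintegral_Ioo_scale hx hG]
  rw [show ENNReal.ofReal (x ^ r) = ENNReal.ofReal x * ENNReal.ofReal (x ^ (r-1)) by
    rw [← ENNReal.ofReal_mul hx.le]
    congr 1
    rw [← Real.rpow_one_add' hx.le (by linarith : (1:ℝ) + (r-1) ≠ 0)]
    ring_nf]
  have hmeas2 : Measurable fun s : ℝ => ENNReal.ofReal ((1 - s) ^ (r-1)) * F (x * s) :=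
    (((measurable_const.sub measurable_id).pow measurable_const).ennreal_ofReal).mul
      (hF.comp (measurable_const_mul x))
  rw [mul_assoc, ← lintegral_const_mul _ hmeas2]
  congr 1
  refine setLIntegral_congr_fun measurableSet_Ioo (fun s hs => ?_)
  have h1s : (0:ℝ) ≤ 1 - s := by linarith [hs.2]
  rw [show x - x * s = x * (1 - s) by ring, Real.mul_rpow hx.le h1s,
    ENNReal.ofReal_mul (Real.rpow_nonneg hx.le _), ← mul_assoc]


lemma hardy_holder {p q r a : ℝ} (hpq : p.HolderConjugate q) (hr : 0 < r)
    {H : ℝ → ℝ≥0∞} (hH : Measurable H) :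
    (∫⁻ s in Set.Ioo (0:ℝ) 1, ENNReal.ofReal ((1 - s) ^ (r-1)) * H s) ^ p
      ≤ (∫⁻ s in Set.Ioo (0:ℝ) 1, ENNReal.ofReal (s ^ (-(a+1)/p) * (1 - s) ^ (r-1))) ^ (p - 1)
        * ∫⁻ s in Set.Ioo (0:ℝ) 1,
            (ENNReal.ofReal s) ^ ((a+1)/q) * ENNReal.ofReal ((1 - s) ^ (r-1)) * H s ^ p := by
  have hp0 : 0 < p := hpq.pos
  have hq0 : 0 < q := hpq.symm.pos
  set A : ℝ → ℝ≥0∞ := fun s => ENNReal.ofReal (s ^ (-(a+1)/p) * (1 - s) ^ (r-1)) with hA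
  set B : ℝ → ℝ≥0∞ := fun s =>
    (ENNReal.ofReal s) ^ ((a+1)/q) * ENNReal.ofReal ((1 - s) ^ (r-1)) * H s ^ p with hB
  have hAm : Measurable A :=
    ((measurable_id.pow measurable_const).mul
      ((measurable_const.sub measurable_id).pow measurable_const)).ennreal_ofReal
  have hBm : Measurable B :=
    ((measurable_id.ennreal_ofReal.pow measurable_const).mul
      ((measurable_const.sub measurable_id).pow measurable_const).ennreal_ofReal).mul
      (hH.pow measurable_const)
  have key : ∀ s ∈ Set.Ioo (0:ℝ) 1,
      ENNReal.ofReal ((1 - s) ^ (r-1)) * H s = (A s) ^ (1/q) * (B s) ^ (1/p) := by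
    intro s hs
    have hs0 : (0:ℝ) < s := hs.1
    have hs1 : (0:ℝ) < 1 - s := by linarith [hs.2]
    have hos : ENNReal.ofReal s ≠ 0 := by simp [hs0]
    have ho1s : ENNReal.ofReal ((1 - s) ^ (r-1)) ≠ 0 := by
      simp [ENNReal.ofReal_eq_zero, not_le, Real.rpow_pos_of_pos hs1]
    rw [hA, hB]
    simp only
    rw [ENNReal.ofReal_mul (Real.rpow_nonneg hs0.le _),
      ← ENNReal.ofReal_rpow_of_pos hs0]
    rw [ENNReal.mul_rpow_of_nonneg _ _ (by positivity : (0:ℝ) ≤ 1/q),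
      ENNReal.mul_rpow_of_nonneg _ _ (by positivity : (0:ℝ) ≤ 1/p),
      ENNReal.mul_rpow_of_nonneg _ _ (by positivity : (0:ℝ) ≤ 1/p),
      ← ENNReal.rpow_mul, ← ENNReal.rpow_mul, ← ENNReal.rpow_mul]
    have rearr : ∀ (X Y Z W V : ℝ≥0∞), X * Y * (Z * W * V) = (X * Z) * ((Y * W) * V) := by
      intros; ring
    rw [rearr, ← ENNReal.rpow_add _ _ hos ENNReal.ofReal_ne_top,
      ← ENNReal.rpow_add _ _ ho1s ENNReal.ofReal_ne_top]
    rw [show -(a+1)/p * (1/q) + (a+1)/q * (1/p) = 0 by ring, ENNReal.rpow_zero, one_mul,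
      show 1/q + 1/p = 1 by
        rw [one_div, one_div, add_comm]; exact hpq.inv_add_inv_eq_one,
      show p * (1/p) = 1 by field_simp, ENNReal.rpow_one, ENNReal.rpow_one]
  calc (∫⁻ s in Set.Ioo (0:ℝ) 1, ENNReal.ofReal ((1 - s) ^ (r-1)) * H s) ^ p
      = (∫⁻ s in Set.Ioo (0:ℝ) 1, (A s) ^ (1/q) * (B s) ^ (1/p)) ^ p := by
        rw [setLIntegral_congr_fun measurableSet_Ioo key]
    _ ≤ ((∫⁻ s in Set.Ioo (0:ℝ) 1, ((A s) ^ (1/q)) ^ q) ^ (1/q)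
          * (∫⁻ s in Set.Ioo (0:ℝ) 1, ((B s) ^ (1/p)) ^ p) ^ (1/p)) ^ p := by
        refine ENNReal.rpow_le_rpow ?_ hp0.le
        exact ENNReal.lintegral_mul_le_Lp_mul_Lq _ hpq.symm
          ((hAm.pow measurable_const).aemeasurable) ((hBm.pow measurable_const).aemeasurable)
    _ = ((∫⁻ s in Set.Ioo (0:ℝ) 1, A s) ^ (1/q)
          * (∫⁻ s in Set.Ioo (0:ℝ) 1, B s) ^ (1/p)) ^ p := by
        congr 2
        · congr 1
          refine lintegral_congr fun s => ?_
          rw [← ENNReal.rpow_mul, one_div_mul_cancel hq0.ne', ENNReal.rpow_one]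
        · congr 1
          refine lintegral_congr fun s => ?_
          rw [← ENNReal.rpow_mul, one_div_mul_cancel hp0.ne', ENNReal.rpow_one]
    _ = (∫⁻ s in Set.Ioo (0:ℝ) 1, A s) ^ (p - 1) * (∫⁻ s in Set.Ioo (0:ℝ) 1, B s) := by
        rw [ENNReal.mul_rpow_of_nonneg _ _ hp0.le, ← ENNReal.rpow_mul, ← ENNReal.rpow_mul,
          show 1/q * p = p - 1 by
            rw [hpq.conjugate_eq]; field_simp,
          show 1/p * p = 1 by field_simp, ENNReal.rpow_one]


theorem weighted_hardy_inequality (p r a : ℝ) (hp : 1 < p) (hr : 0 < r) (ha : a < p - 1)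
    (f : ℝ → ℝ) (hf : Measurable f)
    (hint : IntegrableOn (fun x : ℝ => x ^ a * |f x| ^ p) (Set.Ioi (0 : ℝ))) :
    ∫ x in Set.Ioi (0 : ℝ),
        x ^ a *
          |(1 / Real.Gamma r) * (∫ t in Set.Ioo (0 : ℝ) x, (x - t) ^ (r - 1) * f t) / x ^ r| ^ p ≤
      (Real.Gamma (1 - (a + 1) / p) / Real.Gamma (r + 1 - (a + 1) / p)) ^ p *
        ∫ x in Set.Ioi (0 : ℝ), x ^ a * |f x| ^ p := by
  have hpq : p.HolderConjugate (p / (p - 1)) := Real.HolderConjugate.conjExponent hp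
  set q : ℝ := p / (p - 1) with hq
  have hp0 : 0 < p := hpq.pos
  have hu : 0 < 1 - (a + 1) / p := by
    rw [sub_pos, div_lt_one hp0]; linarith
  have hΓr : 0 < Real.Gamma r := Real.Gamma_pos_of_pos hr
  set c : ℝ := 1 / Real.Gamma r with hcdef
  have hc : 0 < c := by positivity
  set F : ℝ → ℝ≥0∞ := fun t => ENNReal.ofReal |f t| with hFdef
  have hF : Measurable F := hf.abs.ennreal_ofReal
  set I : ℝ → ℝ := fun x => ∫ t in Set.Ioo (0:ℝ) x, (x - t) ^ (r - 1) * f t with hIdef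
  set L : ℝ → ℝ≥0∞ :=
    fun x => ∫⁻ s in Set.Ioo (0:ℝ) 1, ENNReal.ofReal ((1 - s) ^ (r-1)) * F (x * s) with hLdef
  set W : ℝ≥0∞ :=
    ∫⁻ s in Set.Ioo (0:ℝ) 1, ENNReal.ofReal (s ^ (-(a+1)/p) * (1 - s) ^ (r-1)) with hWdef
  set Bf : ℝ → ℝ≥0∞ := fun x => ∫⁻ s in Set.Ioo (0:ℝ) 1,
    (ENNReal.ofReal s) ^ ((a+1)/q) * ENNReal.ofReal ((1 - s) ^ (r-1)) * (F (x * s)) ^ p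
    with hBfdef
  set R : ℝ≥0∞ := ∫⁻ x in Set.Ioi (0:ℝ), ENNReal.ofReal (x ^ a) * (F x) ^ p with hRdef
  set M : ℝ := Real.Gamma (1 - (a+1)/p) * Real.Gamma r / Real.Gamma ((1 - (a+1)/p) + r)
    with hMdef
  have hM : 0 < M := by
    have := Real.Gamma_pos_of_pos hu
    have := Real.Gamma_pos_of_pos (by linarith : (0:ℝ) < (1 - (a+1)/p) + r)
    positivity
  -- measurability facts
  have hL : Measurable L := by
    apply Measurable.lintegral_prod_right'
      (f := fun z : ℝ × ℝ => ENNReal.ofReal ((1 - z.2) ^ (r-1)) * F (z.1 * z.2))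
    exact ((measurable_const.sub measurable_snd).pow measurable_const).ennreal_ofReal.mul
      (hF.comp (measurable_fst.mul measurable_snd))
  have hBf : Measurable Bf := by
    apply Measurable.lintegral_prod_right'
      (f := fun z : ℝ × ℝ => (ENNReal.ofReal z.2) ^ ((a+1)/q)
        * ENNReal.ofReal ((1 - z.2) ^ (r-1)) * (F (z.1 * z.2)) ^ p)
    exact ((measurable_snd.ennreal_ofReal.pow measurable_const).mul
      ((measurable_const.sub measurable_snd).pow measurable_const).ennreal_ofReal).mul
      ((hF.comp (measurable_fst.mul measurable_snd)).pow measurable_const)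
  have hI : Measurable I := by
    have hH : Measurable (fun z : ℝ × ℝ =>
        if z.2 ∈ Set.Ioo (0:ℝ) z.1 then (z.1 - z.2) ^ (r-1) * f z.2 else 0) := by
      refine Measurable.ite ?_
        (((measurable_fst.sub measurable_snd).pow measurable_const).mul
          (hf.comp measurable_snd)) measurable_const
      exact (measurableSet_lt measurable_const measurable_snd).inter
        (measurableSet_lt measurable_snd measurable_fst)
    have heq : I = fun x => ∫ t, (fun z : ℝ × ℝ =>
        if z.2 ∈ Set.Ioo (0:ℝ) z.1 then (z.1 - z.2) ^ (r-1) * f z.2 else 0) (x, t) := by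
      funext x
      rw [hIdef]
      simp only
      rw [← integral_indicator measurableSet_Ioo]
      congr 1
      funext t
      rw [Set.indicator_apply]
    rw [heq]
    exact (hH.stronglyMeasurable.integral_prod_right').measurable
  have hInteg : Measurable (fun x : ℝ => x ^ a * |c * I x / x ^ r| ^ p) :=
    (measurable_id.pow measurable_const).mul
      ((((measurable_const.mul hI).div (measurable_id.pow measurable_const)).abs).pow
        measurable_const)
  -- W = ofReal M, and positivity facts
  have hW : W = ENNReal.ofReal M := by
    rw [hWdef, hMdef, ← beta_value hu hr,
      ofReal_integral_eq_lintegral_ofReal (beta_integrable hu hr)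
        ((ae_restrict_iff' measurableSet_Ioo).2 (ae_of_all _ fun s hs => by
          have h1 : (0:ℝ) ≤ s := hs.1.le
          have h2 : (0:ℝ) ≤ 1 - s := by linarith [hs.2]
          positivity))]
    refine setLIntegral_congr_fun measurableSet_Ioo (fun s hs => ?_)
    rw [show (1 - (a+1)/p) - 1 = -(a+1)/p by ring]
  have hW0 : W ≠ 0 := by rw [hW]; simp [ENNReal.ofReal_eq_zero, not_le, hM]
  have hWtop : W ≠ ⊤ := by rw [hW]; exact ENNReal.ofReal_ne_top
  -- R = ofReal of the RHS integral
  have hRHS_nn : (0:ℝ) ≤ ∫ x in Set.Ioi (0:ℝ), x ^ a * |f x| ^ p := by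
    refine setIntegral_nonneg measurableSet_Ioi fun x hx => ?_
    have hx0 : (0:ℝ) < x := hx
    positivity
  have hR : ENNReal.ofReal (∫ x in Set.Ioi (0:ℝ), x ^ a * |f x| ^ p) = R := by
    rw [ofReal_integral_eq_lintegral_ofReal hint
      ((ae_restrict_iff' measurableSet_Ioi).2 (ae_of_all _ fun x hx => by
        have hx0 : (0:ℝ) < x := hx
        positivity))]
    refine setLIntegral_congr_fun measurableSet_Ioi (fun x hx => ?_)
    have hx0 : (0:ℝ) < x := hx
    rw [ENNReal.ofReal_mul (Real.rpow_nonneg hx0.le _),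
      ← ENNReal.ofReal_rpow_of_nonneg (abs_nonneg _) hp0.le]
  -- scaling identity
  have hscale : ∀ s ∈ Set.Ioo (0:ℝ) 1,
      (∫⁻ x in Set.Ioi (0:ℝ), ENNReal.ofReal (x ^ a) * (F (x * s)) ^ p)
        = ENNReal.ofReal (s ^ (-(a+1))) * R := by
    intro s hs
    have hs0 : (0:ℝ) < s := hs.1
    have hg : Measurable (fun y : ℝ => ENNReal.ofReal (y ^ a) * (F y) ^ p) :=
      (measurable_id.pow measurable_const).ennreal_ofReal.mul (hF.pow measurable_const)
    calc ∫⁻ x in Set.Ioi (0:ℝ), ENNReal.ofReal (x ^ a) * (F (x * s)) ^ p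
        = ∫⁻ x in Set.Ioi (0:ℝ), ENNReal.ofReal (s ^ (-a)) *
            ((fun y : ℝ => ENNReal.ofReal (y ^ a) * (F y) ^ p) (s * x)) := by
          refine setLIntegral_congr_fun measurableSet_Ioi (fun x hx => ?_)
          have hx0 : (0:ℝ) < x := hx
          simp only
          rw [Real.mul_rpow hs0.le hx0.le, ← mul_assoc,
            ← ENNReal.ofReal_mul (Real.rpow_nonneg hs0.le _), ← mul_assoc,
            ← Real.rpow_add hs0, neg_add_cancel, Real.rpow_zero, one_mul, mul_comm x s]
      _ = ENNReal.ofReal (s ^ (-a)) * ∫⁻ x in Set.Ioi (0:ℝ),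
            (fun y : ℝ => ENNReal.ofReal (y ^ a) * (F y) ^ p) (s * x) :=
          lintegral_const_mul _ (hg.comp (measurable_const_mul s))
      _ = ENNReal.ofReal (s ^ (-a)) * (ENNReal.ofReal s⁻¹ * R) := by
          rw [lintegral_Ioi_scale hg hs0]
      _ = ENNReal.ofReal (s ^ (-(a+1))) * R := by
          rw [← mul_assoc, ← ENNReal.ofReal_mul (Real.rpow_nonneg hs0.le _)]
          congr 2
          rw [← Real.rpow_neg_one s, ← Real.rpow_add hs0]
          ring_nf
  -- Tonelli + scaling + beta
  have hTon : ∫⁻ x in Set.Ioi (0:ℝ), ENNReal.ofReal (x ^ a) * Bf x = W * R := by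
    have hΦ : Measurable (fun z : ℝ × ℝ => ENNReal.ofReal (z.1 ^ a) *
        ((ENNReal.ofReal z.2) ^ ((a+1)/q) * ENNReal.ofReal ((1 - z.2) ^ (r-1))
          * (F (z.1 * z.2)) ^ p)) :=
      (measurable_fst.pow measurable_const).ennreal_ofReal.mul
        (((measurable_snd.ennreal_ofReal.pow measurable_const).mul
          ((measurable_const.sub measurable_snd).pow measurable_const).ennreal_ofReal).mul
          ((hF.comp (measurable_fst.mul measurable_snd)).pow measurable_const))
    calc ∫⁻ x in Set.Ioi (0:ℝ), ENNReal.ofReal (x ^ a) * Bf x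
        = ∫⁻ x in Set.Ioi (0:ℝ), ∫⁻ s in Set.Ioo (0:ℝ) 1, ENNReal.ofReal (x ^ a) *
            ((ENNReal.ofReal s) ^ ((a+1)/q) * ENNReal.ofReal ((1 - s) ^ (r-1))
              * (F (x * s)) ^ p) := by
          refine setLIntegral_congr_fun measurableSet_Ioi (fun x hx => ?_)
          exact (lintegral_const_mul _ (((measurable_id.ennreal_ofReal.pow measurable_const).mul
            ((measurable_const.sub measurable_id).pow measurable_const).ennreal_ofReal).mul
            ((hF.comp (measurable_const_mul x)).pow measurable_const))).symm
      _ = ∫⁻ s in Set.Ioo (0:ℝ) 1, ∫⁻ x in Set.Ioi (0:ℝ), ENNReal.ofReal (x ^ a) *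
            ((ENNReal.ofReal s) ^ ((a+1)/q) * ENNReal.ofReal ((1 - s) ^ (r-1))
              * (F (x * s)) ^ p) :=
          lintegral_lintegral_swap hΦ.aemeasurable
      _ = ∫⁻ s in Set.Ioo (0:ℝ) 1, (ENNReal.ofReal s) ^ ((a+1)/q)
            * ENNReal.ofReal ((1 - s) ^ (r-1)) *
            ∫⁻ x in Set.Ioi (0:ℝ), ENNReal.ofReal (x ^ a) * (F (x * s)) ^ p := by
          refine setLIntegral_congr_fun measurableSet_Ioo (fun s hs => ?_)
          calc ∫⁻ x in Set.Ioi (0:ℝ), ENNReal.ofReal (x ^ a) *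
                ((ENNReal.ofReal s) ^ ((a+1)/q) * ENNReal.ofReal ((1 - s) ^ (r-1))
                  * (F (x * s)) ^ p)
              = ∫⁻ x in Set.Ioi (0:ℝ), ((ENNReal.ofReal s) ^ ((a+1)/q)
                  * ENNReal.ofReal ((1 - s) ^ (r-1))) *
                  (ENNReal.ofReal (x ^ a) * (F (x * s)) ^ p) :=
                lintegral_congr fun x => by ring
            _ = _ := lintegral_const_mul _
                ((measurable_id.pow measurable_const).ennreal_ofReal.mul
                  ((hF.comp (measurable_mul_const s)).pow measurable_const))
      _ = ∫⁻ s in Set.Ioo (0:ℝ) 1, ENNReal.ofReal (s ^ (-(a+1)/p) * (1 - s) ^ (r-1)) * R := by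
          refine setLIntegral_congr_fun measurableSet_Ioo (fun s hs => ?_)
          rw [hscale s hs]
          have hs0 : (0:ℝ) < s := hs.1
          have hos : ENNReal.ofReal s ≠ 0 := by simp [hs0]
          have hkey : (ENNReal.ofReal s) ^ ((a+1)/q) * ENNReal.ofReal ((1 - s) ^ (r-1))
              * ENNReal.ofReal (s ^ (-(a+1)))
              = ENNReal.ofReal (s ^ (-(a+1)/p) * (1 - s) ^ (r-1)) := by
            rw [ENNReal.ofReal_mul (Real.rpow_nonneg hs0.le _),
              ← ENNReal.ofReal_rpow_of_pos hs0, ← ENNReal.ofReal_rpow_of_pos hs0,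
              show -(a+1)/p = (a+1)/q + -(a+1) by rw [hq]; field_simp; ring,
              ENNReal.rpow_add _ _ hos ENNReal.ofReal_ne_top]
            ring
          rw [← hkey]
          ring
      _ = W * R :=
          lintegral_mul_const _ ((measurable_id.pow measurable_const).mul
              ((measurable_const.sub measurable_id).pow measurable_const)).ennreal_ofReal
  -- pointwise bound (step 1)
  have key : ∀ x ∈ Set.Ioi (0:ℝ),
      ENNReal.ofReal (x ^ a * |c * I x / x ^ r| ^ p)
        ≤ ENNReal.ofReal (x ^ a) * (ENNReal.ofReal c) ^ p * (L x) ^ p := by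
    intro x hx
    have hx0 : (0:ℝ) < x := hx
    have hKx : ∫⁻ t in Set.Ioo (0:ℝ) x, ENNReal.ofReal ((x - t) ^ (r-1)) * F t
        = ENNReal.ofReal (x ^ r) * L x := subK hr hx0 hF
    by_cases hLtop : L x = ⊤
    · have h1 : ENNReal.ofReal (x ^ a) ≠ 0 := by
        simp [ENNReal.ofReal_eq_zero, not_le, Real.rpow_pos_of_pos hx0]
      have h2 : (ENNReal.ofReal c) ^ p ≠ 0 :=
        (ENNReal.rpow_pos (by simp [hc]) ENNReal.ofReal_ne_top).ne'
      rw [hLtop, ENNReal.top_rpow_of_pos hp0, ENNReal.mul_top (mul_ne_zero h1 h2)]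
      exact le_top
    · have hIb : |I x| ≤ (ENNReal.ofReal (x ^ r) * L x).toReal := by
        have h1 := norm_integral_le_lintegral_norm
          (μ := volume.restrict (Set.Ioo (0:ℝ) x)) (fun t => (x - t) ^ (r-1) * f t)
        rw [Real.norm_eq_abs] at h1
        refine h1.trans (le_of_eq ?_)
        congr 1
        rw [← hKx]
        refine setLIntegral_congr_fun measurableSet_Ioo (fun t ht => ?_)
        have hxt : (0:ℝ) ≤ x - t := by linarith [ht.2]
        rw [Real.norm_eq_abs, abs_mul, abs_of_nonneg (Real.rpow_nonneg hxt _),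
          ENNReal.ofReal_mul (Real.rpow_nonneg hxt _)]
      have hIb' : |c * I x / x ^ r| ≤ c * (L x).toReal := by
        have hxr : (0:ℝ) < x ^ r := Real.rpow_pos_of_pos hx0 r
        rw [abs_div, abs_mul, abs_of_nonneg hc.le, abs_of_pos hxr, div_le_iff₀ hxr]
        calc c * |I x| ≤ c * (ENNReal.ofReal (x ^ r) * L x).toReal := by
              exact mul_le_mul_of_nonneg_left hIb hc.le
          _ = c * (L x).toReal * x ^ r := by
              rw [ENNReal.toReal_mul, ENNReal.toReal_ofReal hxr.le]; ring
      calc ENNReal.ofReal (x ^ a * |c * I x / x ^ r| ^ p)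
          ≤ ENNReal.ofReal (x ^ a * (c * (L x).toReal) ^ p) := by
            refine ENNReal.ofReal_le_ofReal (mul_le_mul_of_nonneg_left
              (Real.rpow_le_rpow (abs_nonneg _) hIb' hp0.le)
              (Real.rpow_nonneg hx0.le _))
        _ = ENNReal.ofReal (x ^ a) * (ENNReal.ofReal c) ^ p * (L x) ^ p := by
            rw [ENNReal.ofReal_mul (Real.rpow_nonneg hx0.le _),
              ← ENNReal.ofReal_rpow_of_nonneg (by positivity) hp0.le,
              ENNReal.ofReal_mul hc.le, ENNReal.ofReal_toReal hLtop,
              ENNReal.mul_rpow_of_nonneg _ _ hp0.le, mul_assoc]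
  -- main chain
  set C : ℝ := Real.Gamma (1 - (a+1)/p) / Real.Gamma (r + 1 - (a+1)/p) with hCdef
  have hΓ2 : 0 < Real.Gamma (r + 1 - (a+1)/p) :=
    Real.Gamma_pos_of_pos (by linarith)
  have hΓ1 : 0 < Real.Gamma (1 - (a+1)/p) := Real.Gamma_pos_of_pos hu
  have hC : 0 < C := by positivity
  have hCM : c * M = C := by
    rw [hcdef, hMdef, hCdef, show (1 - (a+1)/p) + r = r + 1 - (a+1)/p by ring]
    field_simp
  have hmain : ∫⁻ x in Set.Ioi (0:ℝ), ENNReal.ofReal (x ^ a * |c * I x / x ^ r| ^ p)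
      ≤ ENNReal.ofReal (C ^ p * ∫ x in Set.Ioi (0:ℝ), x ^ a * |f x| ^ p) := by
    calc ∫⁻ x in Set.Ioi (0:ℝ), ENNReal.ofReal (x ^ a * |c * I x / x ^ r| ^ p)
        ≤ ∫⁻ x in Set.Ioi (0:ℝ),
            ENNReal.ofReal (x ^ a) * (ENNReal.ofReal c) ^ p * (L x) ^ p :=
          setLIntegral_mono (((measurable_id.pow measurable_const).ennreal_ofReal.mul
            measurable_const).mul (hL.pow measurable_const)) key
      _ ≤ ∫⁻ x in Set.Ioi (0:ℝ), ENNReal.ofReal (x ^ a) * (ENNReal.ofReal c) ^ p *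
            (W ^ (p-1) * Bf x) := by
          refine setLIntegral_mono (((measurable_id.pow measurable_const).ennreal_ofReal.mul
            measurable_const).mul (measurable_const.mul hBf)) fun x hx => ?_
          have hhold := hardy_holder (a := a) hpq hr
            (H := fun s => F (x * s)) (hF.comp (measurable_const_mul x))
          gcongr
      _ = (ENNReal.ofReal c) ^ p * W ^ (p-1) *
            ∫⁻ x in Set.Ioi (0:ℝ), ENNReal.ofReal (x ^ a) * Bf x := by
          calc ∫⁻ x in Set.Ioi (0:ℝ), ENNReal.ofReal (x ^ a) * (ENNReal.ofReal c) ^ p *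
                (W ^ (p-1) * Bf x)
              = ∫⁻ x in Set.Ioi (0:ℝ), ((ENNReal.ofReal c) ^ p * W ^ (p-1)) *
                  (ENNReal.ofReal (x ^ a) * Bf x) := lintegral_congr fun x => by ring
            _ = _ := lintegral_const_mul _
                ((measurable_id.pow measurable_const).ennreal_ofReal.mul hBf)
      _ = (ENNReal.ofReal c) ^ p * W ^ (p-1) * (W * R) := by rw [hTon]
      _ = ENNReal.ofReal (C ^ p * ∫ x in Set.Ioi (0:ℝ), x ^ a * |f x| ^ p) := by
          rw [show (ENNReal.ofReal c) ^ p * W ^ (p-1) * (W * R)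
              = ((ENNReal.ofReal c) * W) ^ p * R by
            rw [ENNReal.mul_rpow_of_nonneg _ _ hp0.le]
            rw [show W ^ p = W ^ (p-1) * W by
              conv_lhs => rw [show p = (p-1) + 1 by ring]
              rw [ENNReal.rpow_add _ _ hW0 hWtop, ENNReal.rpow_one]]
            ring]
          rw [hW, ← ENNReal.ofReal_mul hc.le, hCM, ← hR,
            ENNReal.ofReal_rpow_of_nonneg hC.le hp0.le,
            ← ENNReal.ofReal_mul (by positivity)]
  -- conclusion
  have h_nn : 0 ≤ᵐ[volume.restrict (Set.Ioi (0:ℝ))]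
      fun x => x ^ a * |c * I x / x ^ r| ^ p :=
    (ae_restrict_iff' measurableSet_Ioi).2 (ae_of_all _ fun x hx => by
      have hx0 : (0:ℝ) < x := hx
      positivity)
  rw [show (∫ x in Set.Ioi (0 : ℝ), x ^ a *
      |(1 / Real.Gamma r) * (∫ t in Set.Ioo (0 : ℝ) x, (x - t) ^ (r - 1) * f t) / x ^ r| ^ p)
      = ∫ x in Set.Ioi (0 : ℝ), x ^ a * |c * I x / x ^ r| ^ p from rfl]
  rw [integral_eq_lintegral_of_nonneg_ae h_nn hInteg.aestronglyMeasurable.restrict]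
  refine ENNReal.toReal_le_of_le_ofReal (by positivity) ?_
  exact hmain
end

section
/- Let γ > 0 and let g be analytic on the unit disk with g ∈ B_γ. Then the map a ↦ g(a·) from the unit disk to the Banach space B_γ is analytic (complex differentiable), with derivative at a₀ given by the function z ↦ z g'(a₀ z). -/
open Complex Filter

lemma growth_aux (g : ℂ → ℂ) (hg : DifferentiableOn ℂ g (Metric.ball (0 : ℂ) 1))
    (a₀ τ z : ℂ) (r C : ℝ) (hr : r < 1) (ha : ‖a₀‖ + ‖τ‖ ≤ r) (hτ : τ ≠ 0) (hz : ‖z‖ ≤ 1)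
    (hC : ∀ x ∈ Metric.closedBall (0 : ℂ) r, ‖deriv (deriv g) x‖ ≤ C) :
    ‖(g ((a₀ + τ) * z) - g (a₀ * z)) / τ - z * deriv g (a₀ * z)‖ ≤ C * ‖τ‖ := by
  have hball : Metric.closedBall (0 : ℂ) r ⊆ Metric.ball (0 : ℂ) 1 := fun x hx => by
    simp only [Metric.mem_closedBall, Metric.mem_ball, dist_zero_right] at hx ⊢
    exact lt_of_le_of_lt hx hr
  have hA : AnalyticOnNhd ℂ g (Metric.ball (0 : ℂ) 1) := hg.analyticOnNhd Metric.isOpen_ball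
  have hA' : AnalyticOnNhd ℂ (deriv g) (Metric.ball (0 : ℂ) 1) := hA.deriv
  -- Lipschitz bound for deriv g on the closed ball
  have hLip : ∀ x ∈ Metric.closedBall (0 : ℂ) r, ∀ y ∈ Metric.closedBall (0 : ℂ) r,
      ‖deriv g x - deriv g y‖ ≤ C * ‖x - y‖ := by
    intro x hx y hy
    refine Convex.norm_image_sub_le_of_norm_hasDerivWithin_le
      (fun w hw => ((hA' w (hball hw)).differentiableAt.hasDerivAt).hasDerivWithinAt)
      hC (convex_closedBall 0 r) hy hx
  -- membership facts
  have huball : ∀ t : ℝ, t ∈ Set.Icc (0:ℝ) 1 → (a₀ + t • τ) * z ∈ Metric.closedBall (0 : ℂ) r := by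
    intro t ht
    simp only [Metric.mem_closedBall, dist_zero_right]
    calc ‖(a₀ + t • τ) * z‖ = ‖a₀ + t • τ‖ * ‖z‖ := norm_mul _ _
      _ ≤ (‖a₀‖ + ‖t • τ‖) * 1 :=
        mul_le_mul (norm_add_le _ _) hz (norm_nonneg _) (by positivity)
      _ = ‖a₀‖ + |t| * ‖τ‖ := by rw [mul_one, norm_smul, Real.norm_eq_abs]
      _ ≤ ‖a₀‖ + 1 * ‖τ‖ := by
        gcongr
        exact abs_le.2 ⟨by linarith [ht.1], ht.2⟩
      _ ≤ r := by rw [one_mul]; exact ha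
  have ha₀z : a₀ * z ∈ Metric.closedBall (0 : ℂ) r := by
    have := huball 0 (by norm_num)
    simpa using this
  set c : ℂ := τ * z * deriv g (a₀ * z) with hc
  set φ : ℝ → ℂ := fun t => g ((a₀ + t • τ) * z) - t • c with hφ
  have hderiv : ∀ t ∈ Set.Icc (0:ℝ) 1,
      HasDerivAt φ (τ * z * (deriv g ((a₀ + t • τ) * z) - deriv g (a₀ * z))) t := by
    intro t ht
    have hu : HasDerivAt (fun s : ℝ => (a₀ + s • τ) * z) (((1:ℝ) • τ) * z) t :=
      (((hasDerivAt_id t).smul_const τ).const_add a₀).mul_const z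
    have hgd : HasDerivAt g (deriv g ((a₀ + t • τ) * z)) ((a₀ + t • τ) * z) :=
      (hg.differentiableAt (Metric.isOpen_ball.mem_nhds (hball (huball t ht)))).hasDerivAt
    have hcomp := hgd.scomp t hu
    have hlin : HasDerivAt (fun s : ℝ => s • c) ((1:ℝ) • c) t := (hasDerivAt_id t).smul_const c
    have := hcomp.sub hlin
    simp only [one_smul] at this
    convert this using 1
    · rfl
    · rfl
    simp only [Function.comp, smul_eq_mul, hc]
    ring
  have hbound : ∀ t ∈ Set.Icc (0:ℝ) 1,
      ‖τ * z * (deriv g ((a₀ + t • τ) * z) - deriv g (a₀ * z))‖ ≤ C * ‖τ‖ ^ 2 := by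
    intro t ht
    have h1 : ‖deriv g ((a₀ + t • τ) * z) - deriv g (a₀ * z)‖ ≤ C * ‖τ‖ := by
      calc ‖deriv g ((a₀ + t • τ) * z) - deriv g (a₀ * z)‖
          ≤ C * ‖(a₀ + t • τ) * z - a₀ * z‖ := hLip _ (huball t ht) _ ha₀z
        _ = C * (|t| * ‖τ‖ * ‖z‖) := by
            rw [show (a₀ + t • τ) * z - a₀ * z = (t • τ) * z by ring, norm_mul, norm_smul,
              Real.norm_eq_abs]
        _ ≤ C * (1 * ‖τ‖ * 1) := by
            have hC0 : 0 ≤ C := le_trans (norm_nonneg _) (hC 0 (by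
              simp only [Metric.mem_closedBall, dist_self]
              nlinarith [norm_nonneg a₀, norm_nonneg τ]))
            have habs : |t| ≤ 1 := abs_le.2 ⟨by linarith [ht.1], ht.2⟩
            have : |t| * ‖τ‖ * ‖z‖ ≤ 1 * ‖τ‖ * 1 := by
              apply mul_le_mul _ hz (norm_nonneg _) (by positivity)
              exact mul_le_mul_of_nonneg_right habs (norm_nonneg _)
            nlinarith
        _ = C * ‖τ‖ := by ring
    calc ‖τ * z * (deriv g ((a₀ + t • τ) * z) - deriv g (a₀ * z))‖
        = ‖τ‖ * ‖z‖ * ‖deriv g ((a₀ + t • τ) * z) - deriv g (a₀ * z)‖ := by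
          rw [norm_mul, norm_mul]
      _ ≤ ‖τ‖ * 1 * (C * ‖τ‖) := by
          apply mul_le_mul _ h1 (norm_nonneg _) (by positivity)
          exact mul_le_mul_of_nonneg_left hz (norm_nonneg _)
      _ = C * ‖τ‖ ^ 2 := by ring
  have hmvt : ‖φ 1 - φ 0‖ ≤ C * ‖τ‖ ^ 2 * ‖(1:ℝ) - 0‖ :=
    Convex.norm_image_sub_le_of_norm_hasDerivWithin_le
      (fun t ht => (hderiv t ht).hasDerivWithinAt) hbound (convex_Icc 0 1)
      (by norm_num) (by norm_num)
  have hφ1 : φ 1 - φ 0 = g ((a₀ + τ) * z) - g (a₀ * z) - c := by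
    simp only [hφ, one_smul, zero_smul, mul_zero, add_zero, zero_mul]
    ring
  have key : (g ((a₀ + τ) * z) - g (a₀ * z)) / τ - z * deriv g (a₀ * z) = (φ 1 - φ 0) / τ := by
    rw [hφ1, hc]
    field_simp
  rw [key, norm_div]
  rw [hφ1] at hmvt ⊢
  have hτ0 : 0 < ‖τ‖ := norm_pos_iff.2 hτ
  rw [div_le_iff₀ hτ0]
  calc ‖g ((a₀ + τ) * z) - g (a₀ * z) - c‖ ≤ C * ‖τ‖ ^ 2 * ‖(1:ℝ) - 0‖ := hmvt
    _ = C * ‖τ‖ * ‖τ‖ := by norm_num; ring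


/-- Analyticity of the map `a ↦ g(a·)` into the growth space `B_γ`: the difference quotient
converges in the `B_γ` norm to the function `z ↦ z * g'(a₀ z)`. -/
theorem growth_space_dilation_analytic (γ : ℝ) (hγ : 0 < γ) (g : ℂ → ℂ)
    (hg : DifferentiableOn ℂ g (Metric.ball (0 : ℂ) 1))
    (hbdd : BddAbove (Set.range fun z : Metric.ball (0 : ℂ) 1 =>
      ‖g z‖ * (1 - ‖(z : ℂ)‖ ^ 2) ^ γ))
    (a₀ : ℂ) (ha₀ : ‖a₀‖ < 1) :
    Tendsto
      (fun τ : ℂ =>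
        ⨆ z : Metric.ball (0 : ℂ) 1,
          ‖(g ((a₀ + τ) * z) - g (a₀ * z)) / τ - (z : ℂ) * deriv g (a₀ * z)‖ *
            (1 - ‖(z : ℂ)‖ ^ 2) ^ γ)
      (nhdsWithin 0 {τ : ℂ | τ ≠ 0}) (nhds 0) := by
  haveI : Nonempty (Metric.ball (0 : ℂ) 1) := ⟨⟨0, by simp⟩⟩
  set r : ℝ := (1 + ‖a₀‖) / 2 with hrdef
  have hr1 : r < 1 := by rw [hrdef]; linarith
  have hr0 : 0 < r := by rw [hrdef]; positivity
  set δ : ℝ := (1 - ‖a₀‖) / 2 with hδdef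
  have hδ : 0 < δ := by rw [hδdef]; linarith
  have hball : Metric.closedBall (0 : ℂ) r ⊆ Metric.ball (0 : ℂ) 1 := fun x hx => by
    simp only [Metric.mem_closedBall, Metric.mem_ball, dist_zero_right] at hx ⊢
    exact lt_of_le_of_lt hx hr1
  have hA : AnalyticOnNhd ℂ (deriv (deriv g)) (Metric.ball (0 : ℂ) 1) :=
    ((hg.analyticOnNhd Metric.isOpen_ball).deriv).deriv
  have hcont : ContinuousOn (deriv (deriv g)) (Metric.closedBall (0 : ℂ) r) :=
    hA.continuousOn.mono hball
  obtain ⟨C, hC⟩ := (isCompact_closedBall (0 : ℂ) r).exists_bound_of_continuousOn hcont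
  have hC0 : 0 ≤ C := le_trans (norm_nonneg _) (hC 0 (by
    simp only [Metric.mem_closedBall, dist_self]; exact hr0.le))
  apply squeeze_zero' (g := fun τ : ℂ => C * ‖τ‖)
  · filter_upwards with τ
    refine Real.iSup_nonneg fun z => mul_nonneg (norm_nonneg _) (Real.rpow_nonneg ?_ γ)
    have hz : ‖(z : ℂ)‖ < 1 := by
      have := Metric.mem_ball.mp z.2
      rwa [dist_zero_right] at this
    nlinarith [norm_nonneg (z : ℂ)]
  · have hmem1 : ∀ᶠ τ : ℂ in nhdsWithin 0 {τ : ℂ | τ ≠ 0}, ‖τ‖ < δ :=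
      eventually_nhdsWithin_of_eventually_nhds <|
        Filter.eventually_of_mem (Metric.ball_mem_nhds (0 : ℂ) hδ) (fun x hx => by
          simpa [dist_zero_right] using hx)
    have hmem2 : ∀ᶠ τ : ℂ in nhdsWithin 0 {τ : ℂ | τ ≠ 0}, τ ≠ 0 :=
      eventually_mem_nhdsWithin
    filter_upwards [hmem1, hmem2] with τ h1 h2
    apply ciSup_le
    intro z
    have hz1 : ‖(z : ℂ)‖ < 1 := by
      have := Metric.mem_ball.mp z.2
      rwa [dist_zero_right] at this
    have har : ‖a₀‖ + ‖τ‖ ≤ r := by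
      rw [hrdef]
      have := h1
      rw [hδdef] at this
      linarith
    have hkey := growth_aux g hg a₀ τ z r C hr1 har h2 hz1.le hC
    have hzsq : 0 ≤ 1 - ‖(z : ℂ)‖ ^ 2 := by nlinarith [norm_nonneg (z : ℂ)]
    have hzsq1 : 1 - ‖(z : ℂ)‖ ^ 2 ≤ 1 := by nlinarith [norm_nonneg (z : ℂ)]
    calc ‖(g ((a₀ + τ) * z) - g (a₀ * z)) / τ - (z : ℂ) * deriv g (a₀ * z)‖ *
          (1 - ‖(z : ℂ)‖ ^ 2) ^ γ
        ≤ (C * ‖τ‖) * 1 :=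
          mul_le_mul hkey (Real.rpow_le_one hzsq hzsq1 hγ.le)
            (Real.rpow_nonneg hzsq γ) (by positivity)
      _ = C * ‖τ‖ := mul_one _
  · have h := (tendsto_norm_zero (E := ℂ)).const_mul C
    rw [mul_zero] at h
    exact tendsto_nhdsWithin_of_tendsto_nhds h
end
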